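/- (Proposition 4, value-equivalent models yield the same value-iteration trajectory on a Bellman-closed set of functions.) Let m = (r, p) and m̃ = (r̃, p̃) be models with A finite and nonempty. Let V' be a set of functions S → ℝ such that v ∈ V' implies T_{m,π} v ∈ V' for every policy π. Assume T_{m,π} v = T_{m̃,π} v for every policy π and every v ∈ V'. Let T and T̃ denote the Bellman optimality operators of m and m̃, given by (T v)(s) = max_{a ∈ A} (r s a + γ * ∑_{s'} p s a s' * v s') and analogously for T̃. Then for every v' ∈ V' and every n ∈ ℕ, the n-fold iterate T^[n] v' lies in V' and T̃^[n] v' = T^[n] v'. -/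

import Mathlib

open Finset

/-- A model of an MDP: rewards and a transition kernel. -/
structure Model (S A : Type) [Fintype S] [Fintype A] where
  r : S → A → ℝ
  p : S → A → S → ℝ
  p_nonneg : ∀ s a s', 0 ≤ p s a s'
  p_sum_one : ∀ s a, ∑ s', p s a s' = 1

/-- A (stochastic) policy. -/
structure Policy (S A : Type) [Fintype S] [Fintype A] where
  act : S → A → ℝ
  nonneg : ∀ s a, 0 ≤ act s a
  sum_one : ∀ s, ∑ a, act s a = 1

/-- The Bellman operator of model `m` under policy `π` with discount `γ`. -/
noncomputable def bellman {S A : Type} [Fintype S] [Fintype A]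
    (γ : ℝ) (m : Model S A) (π : Policy S A) (v : S → ℝ) : S → ℝ :=
  fun s => ∑ a, π.act s a * (m.r s a + γ * ∑ s', m.p s a s' * v s')


/-- The Bellman optimality operator of a model. -/
noncomputable def bellmanOpt {S A : Type} [Fintype S] [Fintype A] [Nonempty A]
    (γ : ℝ) (m : Model S A) (v : S → ℝ) : S → ℝ :=
  fun s => Finset.univ.sup' Finset.univ_nonempty
    (fun a => m.r s a + γ * ∑ s', m.p s a s' * v s')


/-- A deterministic policy given by a function `f : S → A`. -/
noncomputable def detPolicy {S A : Type} [Fintype S] [Fintype A] [DecidableEq A]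
    (f : S → A) : Policy S A where
  act := fun s a => if a = f s then 1 else 0
  nonneg := fun s a => by split <;> norm_num
  sum_one := fun s => by simp

lemma bellman_detPolicy {S A : Type} [Fintype S] [Fintype A] [DecidableEq A]
    (γ : ℝ) (m : Model S A) (f : S → A) (v : S → ℝ) (s : S) :
    bellman γ m (detPolicy f) v s
      = m.r s (f s) + γ * ∑ s', m.p s (f s) s' * v s' := by
  simp [bellman, detPolicy, Finset.sum_ite_eq']

lemma Q_eq {S A : Type} [Fintype S] [Fintype A] [Nonempty S] [Nonempty A]
    (γ : ℝ) (m mtil : Model S A) (v : S → ℝ)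
    (h : ∀ π : Policy S A, bellman γ m π v = bellman γ mtil π v)
    (s : S) (a : A) :
    m.r s a + γ * ∑ s', m.p s a s' * v s'
      = mtil.r s a + γ * ∑ s', mtil.p s a s' * v s' := by
  classical
  have := congrFun (h (detPolicy (fun _ => a))) s
  rwa [bellman_detPolicy, bellman_detPolicy] at this

/-- **Proposition 4**: value-equivalent models yield the same value-iteration
trajectory on a Bellman-closed set of functions. -/
theorem valueEquiv_same_value_iteration {S A : Type} [Fintype S] [Fintype A]
    [Nonempty S] [Nonempty A]
    (γ : ℝ) (hγ0 : 0 ≤ γ) (hγ1 : γ < 1)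
    (m mtil : Model S A) (V' : Set (S → ℝ))
    (hclosed : ∀ v ∈ V', ∀ π : Policy S A, bellman γ m π v ∈ V')
    (hve : ∀ π : Policy S A, ∀ v ∈ V', bellman γ m π v = bellman γ mtil π v) :
    ∀ v' ∈ V', ∀ n : ℕ,
      (bellmanOpt γ m)^[n] v' ∈ V' ∧
      (bellmanOpt γ mtil)^[n] v' = (bellmanOpt γ m)^[n] v' := by
  classical
  intro v' hv' n
  induction n with
  | zero => exact ⟨hv', rfl⟩
  | succ n ih =>
    obtain ⟨hmem, heq⟩ := ih
    set w := (bellmanOpt γ m)^[n] v' with hw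
    -- greedy policy for m at w
    have hgreedy : ∀ s : S, ∃ a : A,
        Finset.univ.sup' Finset.univ_nonempty
          (fun a => m.r s a + γ * ∑ s', m.p s a s' * w s')
        = m.r s a + γ * ∑ s', m.p s a s' * w s' := fun s =>
      Finset.exists_mem_eq_sup' Finset.univ_nonempty _ |>.imp fun a h => h.2
    choose f hf using hgreedy
    have hopt : bellmanOpt γ m w = bellman γ m (detPolicy f) w := by
      funext s
      rw [bellman_detPolicy, bellmanOpt, hf s]
    have hmem' : bellmanOpt γ m w ∈ V' := by
      rw [hopt]; exact hclosed w hmem (detPolicy f)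
    have hQ := Q_eq γ m mtil w (fun π => hve π w hmem)
    have heq' : bellmanOpt γ mtil w = bellmanOpt γ m w := by
      funext s
      unfold bellmanOpt
      congr 1
      funext a
      exact (hQ s a).symm
    rw [Function.iterate_succ_apply', Function.iterate_succ_apply', heq, ← hw]
    exact ⟨hmem', heq'⟩
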